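/- Let n ≥ 1 be an integer, L ≥ 0 and λ > 0. Let B : ℝⁿ → Sym_n(ℝ) be L-Lipschitz with B(0) = Id_n, and for x ∈ ℝⁿ let A(x) ∈ Sym_{n+1}(ℝ) be the block-diagonal matrix with blocks B(x) and 1; assume furthermore that ⟨A(x)ξ, ξ⟩ ≥ λ|ξ|² for every x ∈ ℝⁿ and ξ ∈ ℝ^{n+1}. For X = (x,y) ∈ ℝ^{n+1} with X ≠ 0, set μ̃(X) = ⟨A(x)X, X⟩ / |X|² and Z(X) = A(x)X / μ̃(X). Then there is a constant C = C(n, L, λ) > 0 such that at every X = (x,y) with 0 < |X| ≤ 1 at which B is differentiable at x, the map Z is differentiable at X, the operator norm of DZ(X) − Id_{n+1} is at most C|X|, and | div Z(X) − (n+1) | ≤ C |X|. -/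

import Mathlib

open scoped RealInnerProductSpace

open ContinuousLinearMap
set_option maxHeartbeats 2000000
set_option synthInstance.maxHeartbeats 400000

local notation "Esp" n => EuclideanSpace ℝ (Fin n)

lemma keylemma (n : ℕ) (L lam : ℝ) (hL : 0 ≤ L) (hlam : 0 < lam)
    (B : (Esp n) → ((Esp n) →L[ℝ] (Esp n)))
    (hLip : ∀ x x', ‖B x - B x'‖ ≤ L * ‖x - x'‖)
    (hB0 : B 0 = ContinuousLinearMap.id ℝ (Esp n))
    (hell : ∀ (x u : Esp n) (t : ℝ),
        lam * (‖u‖ ^ 2 + t ^ 2) ≤ ⟪B x u, u⟫ + t ^ 2)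
    (x : Esp n) (y : ℝ)
    (hε0 : 0 < Real.sqrt (‖x‖ ^ 2 + y ^ 2)) (hε1 : Real.sqrt (‖x‖ ^ 2 + y ^ 2) ≤ 1)
    (hBd : DifferentiableAt ℝ B x) :
    ∃ D : ((Esp n) × ℝ) →L[ℝ] (Esp n) × ℝ,
      HasFDerivAt (fun X : (Esp n) × ℝ =>
          (((⟪B X.1 X.1, X.1⟫ + X.2 ^ 2) / (‖X.1‖ ^ 2 + X.2 ^ 2))⁻¹) • (B X.1 X.1, X.2)) D (x, y) ∧
      ∀ V : (Esp n) × ℝ, ‖D V - V‖ ≤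
        (3 * L / lam + L * (7 + 6 * L) * (1 + L) / lam ^ 2) * Real.sqrt (‖x‖ ^ 2 + y ^ 2) * ‖V‖ := by
  -- basic quantities
  have hNpos : 0 < ‖x‖ ^ 2 + y ^ 2 := Real.sqrt_pos.mp hε0
  have hε2 : ‖x‖ ^ 2 + y ^ 2 = Real.sqrt (‖x‖ ^ 2 + y ^ 2) ^ 2 :=
    (Real.sq_sqrt hNpos.le).symm
  set ε := Real.sqrt (‖x‖ ^ 2 + y ^ 2) with hεdef
  have hεpos : 0 < ε := hε0
  have hxle : ‖x‖ ≤ ε := by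
    have h := Real.sqrt_le_sqrt (show ‖x‖ ^ 2 ≤ ‖x‖ ^ 2 + y ^ 2 by nlinarith [sq_nonneg y])
    rwa [Real.sqrt_sq (norm_nonneg x)] at h
  have hyle : |y| ≤ ε := by
    have h := Real.sqrt_le_sqrt (show y ^ 2 ≤ ‖x‖ ^ 2 + y ^ 2 by nlinarith [sq_nonneg ‖x‖])
    rwa [Real.sqrt_sq_eq_abs] at h
  have hqlam : lam * ε ^ 2 ≤ ⟪B x x, x⟫ + y ^ 2 := by
    rw [← hε2]; exact hell x x y
  have hqpos : 0 < ⟪B x x, x⟫ + y ^ 2 := lt_of_lt_of_le (by positivity) hqlam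
  have hq0 : (⟪B x x, x⟫ + y ^ 2) ≠ 0 := ne_of_gt hqpos
  have hbI : ‖B x - ContinuousLinearMap.id ℝ (Esp n)‖ ≤ L * ε := by
    have h := hLip x 0
    rw [hB0, sub_zero] at h
    exact h.trans (mul_le_mul_of_nonneg_left hxle hL)
  have hkL : ‖fderiv ℝ B x‖ ≤ L := by
    have hlipB : LipschitzWith (Real.toNNReal L) B := by
      apply LipschitzWith.of_dist_le_mul
      intro a b
      rw [dist_eq_norm, dist_eq_norm]
      simpa [Real.coe_toNNReal L hL] using hLip a b
    have h := norm_fderiv_le_of_lipschitz ℝ hlipB (x₀ := x)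
    simpa [Real.coe_toNNReal L hL] using h
  -- the derivative
  have hfst : HasFDerivAt (fun X : (Esp n) × ℝ => X.1) (fst ℝ (Esp n) ℝ) (x, y) :=
    hasFDerivAt_fst
  have hsnd : HasFDerivAt (fun X : (Esp n) × ℝ => X.2) (snd ℝ (Esp n) ℝ) (x, y) :=
    hasFDerivAt_snd
  have hBc : HasFDerivAt (fun X : (Esp n) × ℝ => B X.1)
      ((fderiv ℝ B x).comp (fst ℝ (Esp n) ℝ)) (x, y) :=
    HasFDerivAt.comp (x, y) (hBd.hasFDerivAt) hfst
  have hφ : HasFDerivAt (fun X : (Esp n) × ℝ => B X.1 X.1)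
      ((B x).comp (fst ℝ (Esp n) ℝ) + ((fderiv ℝ B x).comp (fst ℝ (Esp n) ℝ)).flip x) (x, y) :=
    hBc.clm_apply hfst
  set Dφ : ((Esp n) × ℝ) →L[ℝ] (Esp n) :=
    (B x).comp (fst ℝ (Esp n) ℝ) + ((fderiv ℝ B x).comp (fst ℝ (Esp n) ℝ)).flip x with hDφdef
  have hg : HasFDerivAt (fun X : (Esp n) × ℝ => ((B X.1 X.1, X.2) : (Esp n) × ℝ))
      (Dφ.prod (snd ℝ (Esp n) ℝ)) (x, y) := HasFDerivAt.prodMk hφ hsnd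
  have hy2 : HasFDerivAt (fun X : (Esp n) × ℝ => X.2 ^ 2)
      ((2 : ℕ) • (innerSL ℝ (y : ℝ)).comp (snd ℝ (Esp n) ℝ)) (x, y) := by
    have h := (hasFDerivAt_snd (p := ((x, y) : (Esp n) × ℝ)) (𝕜 := ℝ)).norm_sq
    simpa [Real.norm_eq_abs, sq_abs] using h
  have hinner : HasFDerivAt (fun X : (Esp n) × ℝ => ⟪B X.1 X.1, X.1⟫)
      ((fderivInnerCLM ℝ (B x x, x)).comp (Dφ.prod (fst ℝ (Esp n) ℝ))) (x, y) :=
    hφ.inner ℝ hfst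
  set Dq : ((Esp n) × ℝ) →L[ℝ] ℝ :=
    (fderivInnerCLM ℝ (B x x, x)).comp (Dφ.prod (fst ℝ (Esp n) ℝ))
      + (2 : ℕ) • (innerSL ℝ (y : ℝ)).comp (snd ℝ (Esp n) ℝ) with hDqdef
  have hq : HasFDerivAt (fun X : (Esp n) × ℝ => ⟪B X.1 X.1, X.1⟫ + X.2 ^ 2) Dq (x, y) :=
    hinner.add hy2
  have hNx : HasFDerivAt (fun X : (Esp n) × ℝ => ‖X.1‖ ^ 2)
      ((2 : ℕ) • (innerSL ℝ x).comp (fst ℝ (Esp n) ℝ)) (x, y) :=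
    (hasFDerivAt_fst (p := ((x, y) : (Esp n) × ℝ)) (𝕜 := ℝ)).norm_sq
  set DN : ((Esp n) × ℝ) →L[ℝ] ℝ :=
    (2 : ℕ) • (innerSL ℝ x).comp (fst ℝ (Esp n) ℝ)
      + (2 : ℕ) • (innerSL ℝ (y : ℝ)).comp (snd ℝ (Esp n) ℝ) with hDNdef
  have hN : HasFDerivAt (fun X : (Esp n) × ℝ => ‖X.1‖ ^ 2 + X.2 ^ 2) DN (x, y) := hNx.add hy2
  have hinv : HasFDerivAt (fun X : (Esp n) × ℝ => (⟪B X.1 X.1, X.1⟫ + X.2 ^ 2)⁻¹)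
      ((ContinuousLinearMap.smulRight (1 : ℝ →L[ℝ] ℝ)
        (-((⟪B x x, x⟫ + y ^ 2) ^ 2)⁻¹)).comp Dq) (x, y) :=
    (hasFDerivAt_inv hq0).comp (x, y) hq
  set Dinv : ((Esp n) × ℝ) →L[ℝ] ℝ :=
    (ContinuousLinearMap.smulRight (1 : ℝ →L[ℝ] ℝ)
      (-((⟪B x x, x⟫ + y ^ 2) ^ 2)⁻¹)).comp Dq with hDinvdef
  have hs : HasFDerivAt
      (fun X : (Esp n) × ℝ => (‖X.1‖ ^ 2 + X.2 ^ 2) * (⟪B X.1 X.1, X.1⟫ + X.2 ^ 2)⁻¹)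
      ((‖x‖ ^ 2 + y ^ 2) • Dinv + (⟪B x x, x⟫ + y ^ 2)⁻¹ • DN) (x, y) := hN.mul hinv
  set Ds : ((Esp n) × ℝ) →L[ℝ] ℝ :=
    (‖x‖ ^ 2 + y ^ 2) • Dinv + (⟪B x x, x⟫ + y ^ 2)⁻¹ • DN with hDsdef
  have hZ : HasFDerivAt
      (fun X : (Esp n) × ℝ =>
        ((‖X.1‖ ^ 2 + X.2 ^ 2) * (⟪B X.1 X.1, X.1⟫ + X.2 ^ 2)⁻¹) • ((B X.1 X.1, X.2) : (Esp n) × ℝ))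
      (((‖x‖ ^ 2 + y ^ 2) * (⟪B x x, x⟫ + y ^ 2)⁻¹) • (Dφ.prod (snd ℝ (Esp n) ℝ))
        + Ds.smulRight ((B x x, y) : (Esp n) × ℝ)) (x, y) := hs.smul hg
  have hfeq : (fun X : (Esp n) × ℝ =>
      (((⟪B X.1 X.1, X.1⟫ + X.2 ^ 2) / (‖X.1‖ ^ 2 + X.2 ^ 2))⁻¹) • ((B X.1 X.1, X.2) : (Esp n) × ℝ))
      = (fun X : (Esp n) × ℝ =>
        ((‖X.1‖ ^ 2 + X.2 ^ 2) * (⟪B X.1 X.1, X.1⟫ + X.2 ^ 2)⁻¹) • ((B X.1 X.1, X.2) : (Esp n) × ℝ)) := by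
    funext X
    rw [inv_div, div_eq_mul_inv]
  refine ⟨_, by rw [hfeq]; exact hZ, ?_⟩
  intro V
  have hV1 : ‖V.1‖ ≤ ‖V‖ := norm_fst_le V
  have hV2 : |V.2| ≤ ‖V‖ := norm_snd_le V
  have hVnn : (0:ℝ) ≤ ‖V‖ := norm_nonneg V
  -- evaluation formulas
  have hDφV : Dφ V = B x V.1 + (fderiv ℝ B x V.1) x := by
    simp [hDφdef]
  have hDqV : Dq V = ⟪B x x, V.1⟫ + ⟪Dφ V, x⟫ + 2 * (y * V.2) := by
    simp [hDqdef, fderivInnerCLM_apply, two_smul]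
    ring
  have hDNV : DN V = 2 * ⟪x, V.1⟫ + 2 * (y * V.2) := by
    simp [hDNdef, two_smul]
    ring
  have hDinvV : Dinv V = -((⟪B x x, x⟫ + y ^ 2) ^ 2)⁻¹ * Dq V := by
    simp [hDinvdef, smul_eq_mul]
    ring
  have hDsV : Ds V = (‖x‖ ^ 2 + y ^ 2) * Dinv V + (⟪B x x, x⟫ + y ^ 2)⁻¹ * DN V := by
    simp [hDsdef, smul_eq_mul]
  have hDVval :
      (((‖x‖ ^ 2 + y ^ 2) * (⟪B x x, x⟫ + y ^ 2)⁻¹) • (Dφ.prod (snd ℝ (Esp n) ℝ))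
        + Ds.smulRight ((B x x, y) : (Esp n) × ℝ)) V
      = ((‖x‖ ^ 2 + y ^ 2) * (⟪B x x, x⟫ + y ^ 2)⁻¹) • ((Dφ V, V.2) : (Esp n) × ℝ)
        + Ds V • ((B x x, y) : (Esp n) × ℝ) := by
    simp
  have hpair : ((Dφ V, V.2) : (Esp n) × ℝ) = ((Dφ V - V.1, (0:ℝ)) : (Esp n) × ℝ) + V := by
    ext
    · simp
    · simp
  have hdecomp :
      (((‖x‖ ^ 2 + y ^ 2) * (⟪B x x, x⟫ + y ^ 2)⁻¹) • (Dφ.prod (snd ℝ (Esp n) ℝ))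
        + Ds.smulRight ((B x x, y) : (Esp n) × ℝ)) V - V
      = ((‖x‖ ^ 2 + y ^ 2) * (⟪B x x, x⟫ + y ^ 2)⁻¹) • ((Dφ V - V.1, (0:ℝ)) : (Esp n) × ℝ)
        + ((‖x‖ ^ 2 + y ^ 2) * (⟪B x x, x⟫ + y ^ 2)⁻¹ - 1) • V
        + Ds V • ((B x x, y) : (Esp n) × ℝ) := by
    rw [hDVval, hpair]
    simp only [smul_add, sub_smul, one_smul]
    abel
  rw [hdecomp]
  -- abstract to real quantities
  set g1 : Esp n := B x x with hg1def
  set kv : Esp n := (fderiv ℝ B x V.1) x with hkvdef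
  set dphi : Esp n := Dφ V with hdphidef
  set dq : ℝ := Dq V with hdqvdef
  set dn : ℝ := DN V with hdnvdef
  set ds : ℝ := Ds V with hdsvdef
  clear_value g1 kv dphi dq dn ds
  clear hDφdef hDqdef hDNdef hDinvdef hDsdef hZ hfeq hs hinv hN hNx hq hinner hy2 hg hφ hBc
  clear hDVval hdecomp hpair hdsvdef hdnvdef hdqvdef hdphidef hfst hsnd hBd
  -- basic norm estimates (still need inner structure)
  have hkV : ‖kv‖ ≤ (L * ‖V‖) * ε := by
    rw [hkvdef]
    have h0 : ‖(fderiv ℝ B x) V.1‖ ≤ L * ‖V‖ :=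
      le_trans ((fderiv ℝ B x).le_opNorm V.1) (mul_le_mul hkL hV1 (norm_nonneg _) hL)
    exact le_trans ((fderiv ℝ B x V.1).le_opNorm x)
      (mul_le_mul h0 hxle (norm_nonneg _) (by positivity))
  have hDφ_err : ‖dphi - V.1‖ ≤ 2 * L * ε * ‖V‖ := by
    have h1 : dphi - V.1
        = (B x - ContinuousLinearMap.id ℝ (Esp n)) V.1 + kv := by
      rw [hDφV]; simp [ContinuousLinearMap.sub_apply]; abel
    rw [h1]
    have h2 : ‖(B x - ContinuousLinearMap.id ℝ (Esp n)) V.1‖ ≤ (L * ε) * ‖V‖ :=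
      le_trans ((B x - ContinuousLinearMap.id ℝ (Esp n)).le_opNorm V.1)
        (mul_le_mul hbI hV1 (norm_nonneg _) (by positivity))
    calc ‖(B x - ContinuousLinearMap.id ℝ (Esp n)) V.1 + kv‖
        ≤ ‖(B x - ContinuousLinearMap.id ℝ (Esp n)) V.1‖ + ‖kv‖ := norm_add_le _ _
      _ ≤ (L * ε) * ‖V‖ + (L * ‖V‖) * ε := add_le_add h2 hkV
      _ = 2 * L * ε * ‖V‖ := by ring
  have hBxx_err : ‖g1 - x‖ ≤ L * ε * ε := by
    have h1 : g1 - x = (B x - ContinuousLinearMap.id ℝ (Esp n)) x := by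
      rw [hg1def]; simp
    rw [h1]
    refine le_trans ((B x - ContinuousLinearMap.id ℝ (Esp n)).le_opNorm x) ?_
    exact mul_le_mul hbI hxle (norm_nonneg x) (by positivity)
  have hq_err : |(⟪g1, x⟫ + y ^ 2) - (‖x‖ ^ 2 + y ^ 2)| ≤ L * ε * ε * ε := by
    have h1 : (⟪g1, x⟫ + y ^ 2) - (‖x‖ ^ 2 + y ^ 2) = ⟪g1 - x, x⟫ := by
      rw [inner_sub_left, real_inner_self_eq_norm_sq]; ring
    rw [h1]
    refine le_trans (abs_real_inner_le_norm _ _) ?_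
    calc ‖g1 - x‖ * ‖x‖ ≤ (L * ε * ε) * ε :=
        mul_le_mul hBxx_err hxle (norm_nonneg x) (by positivity)
      _ = L * ε * ε * ε := by ring
  have hqdn_err : |dq - dn| ≤ 3 * L * ε * ε * ‖V‖ := by
    have h1 : dq - dn = ⟪g1 - x, V.1⟫ + ⟪dphi - V.1, x⟫ := by
      rw [hDqV, hDNV, inner_sub_left, inner_sub_left, real_inner_comm V.1 x]
      ring
    rw [h1]
    have h2 : |⟪g1 - x, V.1⟫| ≤ (L * ε * ε) * ‖V‖ :=
      le_trans (abs_real_inner_le_norm _ _)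
        (mul_le_mul hBxx_err hV1 (norm_nonneg _) (by positivity))
    have h3 : |⟪dphi - V.1, x⟫| ≤ (2 * L * ε * ‖V‖) * ε :=
      le_trans (abs_real_inner_le_norm _ _)
        (mul_le_mul hDφ_err hxle (norm_nonneg _) (by positivity))
    calc |⟪g1 - x, V.1⟫ + ⟪dphi - V.1, x⟫| ≤ |⟪g1 - x, V.1⟫| + |⟪dphi - V.1, x⟫| := abs_add_le _ _
      _ ≤ (L * ε * ε) * ‖V‖ + (2 * L * ε * ‖V‖) * ε := add_le_add h2 h3
      _ = 3 * L * ε * ε * ‖V‖ := by ring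
  have hDN_le : |dn| ≤ 4 * ε * ‖V‖ := by
    rw [hDNV]
    have h2 : |⟪x, V.1⟫| ≤ ε * ‖V‖ :=
      le_trans (abs_real_inner_le_norm _ _) (mul_le_mul hxle hV1 (norm_nonneg _) hεpos.le)
    have h3 : |y * V.2| ≤ ε * ‖V‖ := by
      rw [abs_mul]; exact mul_le_mul hyle hV2 (abs_nonneg _) hεpos.le
    calc |2 * ⟪x, V.1⟫ + 2 * (y * V.2)| ≤ |2 * ⟪x, V.1⟫| + |2 * (y * V.2)| := abs_add_le _ _
      _ = 2 * |⟪x, V.1⟫| + 2 * |y * V.2| := by rw [abs_mul, abs_mul]; norm_num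
      _ ≤ 2 * (ε * ‖V‖) + 2 * (ε * ‖V‖) := by linarith
      _ = 4 * ε * ‖V‖ := by ring
  have hg0 : ‖((g1, y) : (Esp n) × ℝ)‖ ≤ (1 + L) * ε := by
    rw [Prod.norm_def]
    apply max_le
    · have h1 : ‖g1‖ ≤ ‖x‖ + ‖g1 - x‖ := by
        simpa using norm_add_le x (g1 - x)
      have h2 : L * ε * ε ≤ L * ε := by
        nlinarith [mul_nonneg (mul_nonneg hL hεpos.le) (sub_nonneg.mpr hε1)]
      simp only
      nlinarith [hBxx_err]
    · have h1 : ‖((g1, y) : (Esp n) × ℝ).2‖ = |y| := Real.norm_eq_abs y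
      rw [h1]
      nlinarith [mul_nonneg hL hεpos.le]
  have hw0 : ‖((dphi - V.1, (0:ℝ)) : (Esp n) × ℝ)‖ = ‖dphi - V.1‖ := by
    rw [Prod.norm_def]
    simp [max_eq_left (norm_nonneg _)]
  -- now make the inner product an opaque real number
  set qI : ℝ := (⟪g1, x⟫ : ℝ) with hqIdef
  clear_value qI
  have hDs_id0 : ds = ((qI + y ^ 2) ^ 2)⁻¹
      * ((qI + y ^ 2) * dn - (‖x‖ ^ 2 + y ^ 2) * dq) := by
    rw [hDsV, hDinvV]
    field_simp
    ring
  clear hDqV hDNV hDφV hkvdef hg1def hkV hDsV hDinvV Ds Dinv DN Dq Dφ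
  -- pure real arithmetic from here on
  have hDq_le : |dq| ≤ (4 + 3 * L) * ε * ‖V‖ := by
    have h1 : |dq| ≤ |dn| + |dq - dn| := by
      calc |dq| = |dn + (dq - dn)| := by ring_nf
        _ ≤ |dn| + |dq - dn| := abs_add_le _ _
    have h2 : 3 * L * ε * ε * ‖V‖ ≤ 3 * L * ε * ‖V‖ := by
      nlinarith [mul_nonneg (mul_nonneg (mul_nonneg hL hεpos.le) hVnn)
        (sub_nonneg.mpr hε1)]
    nlinarith [hqdn_err, hDN_le]
  have hq_up : qI + y ^ 2 ≤ (1 + L) * ε ^ 2 := by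
    have h := (abs_le.mp hq_err).2
    nlinarith [mul_nonneg (mul_nonneg (mul_nonneg hL hεpos.le) hεpos.le)
      (sub_nonneg.mpr hε1)]
  have hnum : |(qI + y ^ 2) * dn - (‖x‖ ^ 2 + y ^ 2) * dq|
      ≤ L * (7 + 6 * L) * ε ^ 4 * ‖V‖ := by
    have h1 : (qI + y ^ 2) * dn - (‖x‖ ^ 2 + y ^ 2) * dq
        = (qI + y ^ 2) * (dn - dq)
          + ((qI + y ^ 2) - (‖x‖ ^ 2 + y ^ 2)) * dq := by ring
    rw [h1]
    have h2 : |(qI + y ^ 2) * (dn - dq)| ≤ ((1 + L) * ε ^ 2) * (3 * L * ε * ε * ‖V‖) := by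
      rw [abs_mul, abs_sub_comm]
      exact mul_le_mul (by rw [abs_of_pos hqpos]; exact hq_up) hqdn_err (abs_nonneg _)
        (by positivity)
    have h3 : |((qI + y ^ 2) - (‖x‖ ^ 2 + y ^ 2)) * dq|
        ≤ (L * ε * ε * ε) * ((4 + 3 * L) * ε * ‖V‖) := by
      rw [abs_mul]
      exact mul_le_mul hq_err hDq_le (abs_nonneg _) (by positivity)
    calc |(qI + y ^ 2) * (dn - dq) + ((qI + y ^ 2) - (‖x‖ ^ 2 + y ^ 2)) * dq|
        ≤ |(qI + y ^ 2) * (dn - dq)|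
          + |((qI + y ^ 2) - (‖x‖ ^ 2 + y ^ 2)) * dq| := abs_add_le _ _
      _ ≤ ((1 + L) * ε ^ 2) * (3 * L * ε * ε * ‖V‖)
          + (L * ε * ε * ε) * ((4 + 3 * L) * ε * ‖V‖) := add_le_add h2 h3
      _ = L * (7 + 6 * L) * ε ^ 4 * ‖V‖ := by ring
  have hq_sq : lam ^ 2 * ε ^ 4 ≤ (qI + y ^ 2) ^ 2 := by
    have h := mul_self_le_mul_self (by positivity : (0:ℝ) ≤ lam * ε ^ 2) hqlam
    calc lam ^ 2 * ε ^ 4 = (lam * ε ^ 2) * (lam * ε ^ 2) := by ring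
      _ ≤ (qI + y ^ 2) * (qI + y ^ 2) := h
      _ = (qI + y ^ 2) ^ 2 := by ring
  have hDs_le : |ds| ≤ (L * (7 + 6 * L) / lam ^ 2) * ‖V‖ := by
    rw [hDs_id0, abs_mul, abs_inv, abs_of_pos (pow_pos hqpos 2)]
    have h4 : ((qI + y ^ 2) ^ 2)⁻¹ ≤ (lam ^ 2 * ε ^ 4)⁻¹ :=
      inv_anti₀ (by positivity) hq_sq
    calc ((qI + y ^ 2) ^ 2)⁻¹ * |(qI + y ^ 2) * dn - (‖x‖ ^ 2 + y ^ 2) * dq|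
        ≤ (lam ^ 2 * ε ^ 4)⁻¹ * (L * (7 + 6 * L) * ε ^ 4 * ‖V‖) :=
          mul_le_mul h4 hnum (abs_nonneg _) (by positivity)
      _ = (L * (7 + 6 * L) / lam ^ 2) * ‖V‖ := by
          field_simp
  have hs0_le : |(‖x‖ ^ 2 + y ^ 2) * (qI + y ^ 2)⁻¹| ≤ 1 / lam := by
    rw [abs_of_pos (mul_pos hNpos (inv_pos.mpr hqpos)), ← div_eq_mul_inv,
      div_le_div_iff₀ hqpos hlam]
    nlinarith [hqlam, hε2]
  have hs0_1 : |(‖x‖ ^ 2 + y ^ 2) * (qI + y ^ 2)⁻¹ - 1| ≤ (L / lam) * ε := by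
    have h1 : (‖x‖ ^ 2 + y ^ 2) * (qI + y ^ 2)⁻¹ - 1
        = ((‖x‖ ^ 2 + y ^ 2) - (qI + y ^ 2)) * (qI + y ^ 2)⁻¹ := by
      field_simp
    rw [h1, abs_mul, abs_inv, abs_of_pos hqpos]
    have h2 : |(‖x‖ ^ 2 + y ^ 2) - (qI + y ^ 2)| ≤ L * ε * ε * ε := by
      rw [abs_sub_comm]; exact hq_err
    have h3 : (qI + y ^ 2)⁻¹ ≤ (lam * ε ^ 2)⁻¹ :=
      inv_anti₀ (by positivity) hqlam
    calc |(‖x‖ ^ 2 + y ^ 2) - (qI + y ^ 2)| * (qI + y ^ 2)⁻¹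
        ≤ (L * ε * ε * ε) * (lam * ε ^ 2)⁻¹ :=
          mul_le_mul h2 h3 (inv_nonneg.mpr hqpos.le) (by positivity)
      _ = (L / lam) * ε := by
          rw [div_mul_eq_mul_div, eq_div_iff (ne_of_gt hlam)]
          field_simp
  have hn1 : ‖((‖x‖ ^ 2 + y ^ 2) * (qI + y ^ 2)⁻¹) • ((dphi - V.1, (0:ℝ)) : (Esp n) × ℝ)‖
      ≤ (1 / lam) * (2 * L * ε * ‖V‖) := by
    rw [norm_smul, Real.norm_eq_abs, hw0]
    exact mul_le_mul hs0_le hDφ_err (norm_nonneg _) (by positivity)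
  have hn2 : ‖((‖x‖ ^ 2 + y ^ 2) * (qI + y ^ 2)⁻¹ - 1) • V‖ ≤ ((L / lam) * ε) * ‖V‖ := by
    rw [norm_smul, Real.norm_eq_abs]
    exact mul_le_mul_of_nonneg_right hs0_1 hVnn
  have hn3 : ‖ds • ((g1, y) : (Esp n) × ℝ)‖
      ≤ ((L * (7 + 6 * L) / lam ^ 2) * ‖V‖) * ((1 + L) * ε) := by
    rw [norm_smul, Real.norm_eq_abs]
    exact mul_le_mul hDs_le hg0 (norm_nonneg _) (by positivity)
  calc ‖((‖x‖ ^ 2 + y ^ 2) * (qI + y ^ 2)⁻¹) • ((dphi - V.1, (0:ℝ)) : (Esp n) × ℝ)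
        + ((‖x‖ ^ 2 + y ^ 2) * (qI + y ^ 2)⁻¹ - 1) • V
        + ds • ((g1, y) : (Esp n) × ℝ)‖
      ≤ ‖((‖x‖ ^ 2 + y ^ 2) * (qI + y ^ 2)⁻¹) • ((dphi - V.1, (0:ℝ)) : (Esp n) × ℝ)‖
        + ‖((‖x‖ ^ 2 + y ^ 2) * (qI + y ^ 2)⁻¹ - 1) • V‖
        + ‖ds • ((g1, y) : (Esp n) × ℝ)‖ := norm_add₃_le
    _ ≤ (1 / lam) * (2 * L * ε * ‖V‖) + ((L / lam) * ε) * ‖V‖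
        + ((L * (7 + 6 * L) / lam ^ 2) * ‖V‖) * ((1 + L) * ε) :=
        add_le_add (add_le_add hn1 hn2) hn3
    _ = (3 * L / lam + L * (7 + 6 * L) * (1 + L) / lam ^ 2) * ε * ‖V‖ := by
        field_simp
        ring

lemma abs_coord_le_norm {m : ℕ} (w : EuclideanSpace ℝ (Fin m)) (i : Fin m) : |w i| ≤ ‖w‖ := by
  have h1 : (⟪EuclideanSpace.single i (1:ℝ), w⟫ : ℝ) = w i := by
    rw [EuclideanSpace.inner_single_left]; simp
  calc |w i| = |(⟪EuclideanSpace.single i (1:ℝ), w⟫ : ℝ)| := by rw [h1]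
    _ ≤ ‖EuclideanSpace.single i (1:ℝ)‖ * ‖w‖ := abs_real_inner_le_norm _ _
    _ = ‖w‖ := by rw [EuclideanSpace.norm_single]; simp


/-- Let `n ≥ 1`, `L ≥ 0`, `λ > 0`. Let `B : ℝⁿ → Sym_n(ℝ)` be `L`-Lipschitz with
`B(0) = Id`, let `A(x)` be block diagonal with blocks `B(x)` and `1` (so that
`A(x)(u,t) = (B(x)u, t)` on `ℝⁿ × ℝ`), and assume `⟨A(x)ξ, ξ⟩ ≥ λ|ξ|²` for all `x, ξ`.
For `X = (x,y) ≠ 0` set `μ̃(X) = ⟨A(x)X, X⟩/|X|²` and `Z(X) = A(x)X / μ̃(X)`, where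
`|X| = (|x|² + y²)^{1/2}`. Then there is `C = C(n,L,λ) > 0` such that at every `X` with
`0 < |X| ≤ 1` at which `B` is differentiable at `x`, the map `Z` is differentiable at
`X`, `‖DZ(X) − Id‖ ≤ C|X|`, and `|div Z(X) − (n+1)| ≤ C|X|`. -/
theorem statement7 (n : ℕ) (hn : 1 ≤ n) (L lam : ℝ) (hL : 0 ≤ L) (hlam : 0 < lam)
    (B : EuclideanSpace ℝ (Fin n) → (EuclideanSpace ℝ (Fin n) →L[ℝ] EuclideanSpace ℝ (Fin n)))
    (hsym : ∀ x u v, ⟪B x u, v⟫ = ⟪u, B x v⟫)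
    (hLip : ∀ x x', ‖B x - B x'‖ ≤ L * ‖x - x'‖)
    (hB0 : B 0 = ContinuousLinearMap.id ℝ (EuclideanSpace ℝ (Fin n)))
    (hell : ∀ (x u : EuclideanSpace ℝ (Fin n)) (t : ℝ),
        lam * (‖u‖ ^ 2 + t ^ 2) ≤ ⟪B x u, u⟫ + t ^ 2) :
    ∃ C > (0 : ℝ), ∀ (x : EuclideanSpace ℝ (Fin n)) (y : ℝ),
      0 < Real.sqrt (‖x‖ ^ 2 + y ^ 2) → Real.sqrt (‖x‖ ^ 2 + y ^ 2) ≤ 1 →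
      DifferentiableAt ℝ B x →
      (DifferentiableAt ℝ
          (fun X : EuclideanSpace ℝ (Fin n) × ℝ =>
            (((⟪B X.1 X.1, X.1⟫ + X.2 ^ 2) / (‖X.1‖ ^ 2 + X.2 ^ 2))⁻¹) •
              (B X.1 X.1, X.2)) (x, y)) ∧
      ‖fderiv ℝ
          (fun X : EuclideanSpace ℝ (Fin n) × ℝ =>
            (((⟪B X.1 X.1, X.1⟫ + X.2 ^ 2) / (‖X.1‖ ^ 2 + X.2 ^ 2))⁻¹) •
              (B X.1 X.1, X.2)) (x, y)
          - ContinuousLinearMap.id ℝ (EuclideanSpace ℝ (Fin n) × ℝ)‖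
        ≤ C * Real.sqrt (‖x‖ ^ 2 + y ^ 2) ∧
      |((∑ i : Fin n,
            (fderiv ℝ
                (fun X : EuclideanSpace ℝ (Fin n) × ℝ =>
                  (((⟪B X.1 X.1, X.1⟫ + X.2 ^ 2) / (‖X.1‖ ^ 2 + X.2 ^ 2))⁻¹) •
                    (B X.1 X.1, X.2)) (x, y)
              ((EuclideanSpace.single i (1 : ℝ)), (0 : ℝ))).1 i)
          + (fderiv ℝ
                (fun X : EuclideanSpace ℝ (Fin n) × ℝ =>
                  (((⟪B X.1 X.1, X.1⟫ + X.2 ^ 2) / (‖X.1‖ ^ 2 + X.2 ^ 2))⁻¹) •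
                    (B X.1 X.1, X.2)) (x, y)
              ((0 : EuclideanSpace ℝ (Fin n)), (1 : ℝ))).2)
        - ((n : ℝ) + 1)| ≤ C * Real.sqrt (‖x‖ ^ 2 + y ^ 2) := by
  have hC0 : 0 ≤ 3 * L / lam + L * (7 + 6 * L) * (1 + L) / lam ^ 2 := by
    have h1 : 0 ≤ 3 * L / lam := div_nonneg (by linarith) hlam.le
    have h2 : 0 ≤ L * (7 + 6 * L) * (1 + L) / lam ^ 2 :=
      div_nonneg (mul_nonneg (mul_nonneg hL (by linarith)) (by linarith)) (by positivity)
    linarith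
  have hnn : (0:ℝ) ≤ (n:ℝ) := Nat.cast_nonneg n
  refine ⟨((n:ℝ) + 1) * (3 * L / lam + L * (7 + 6 * L) * (1 + L) / lam ^ 2) + 1, ?_, ?_⟩
  · nlinarith [mul_nonneg (by linarith : (0:ℝ) ≤ (n:ℝ) + 1) hC0]
  intro x y h0 h1 hBd
  obtain ⟨D, hZ, hb⟩ := keylemma n L lam hL hlam B hLip hB0 hell x y h0 h1 hBd
  have hfd := hZ.fderiv
  have hC0C : 3 * L / lam + L * (7 + 6 * L) * (1 + L) / lam ^ 2
      ≤ ((n:ℝ) + 1) * (3 * L / lam + L * (7 + 6 * L) * (1 + L) / lam ^ 2) + 1 := by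
    nlinarith [mul_nonneg hnn hC0]
  refine ⟨hZ.differentiableAt, ?_, ?_⟩
  · rw [hfd]
    have hCnn : 0 ≤ ((n:ℝ) + 1) * (3 * L / lam + L * (7 + 6 * L) * (1 + L) / lam ^ 2) + 1 := by
      nlinarith [mul_nonneg (by linarith : (0:ℝ) ≤ (n:ℝ) + 1) hC0]
    refine ContinuousLinearMap.opNorm_le_bound _ (mul_nonneg hCnn h0.le) ?_
    · intro V
      have h2 : ‖(D - ContinuousLinearMap.id ℝ (EuclideanSpace ℝ (Fin n) × ℝ)) V‖
          = ‖D V - V‖ := by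
        simp [ContinuousLinearMap.sub_apply]
      rw [h2]
      refine le_trans (hb V) ?_
      have := mul_le_mul_of_nonneg_right (mul_le_mul_of_nonneg_right hC0C h0.le)
        (norm_nonneg V)
      linarith
  · rw [hfd]
    have hterm : ∀ i : Fin n,
        |(D ((EuclideanSpace.single i (1 : ℝ)), (0 : ℝ))).1 i - 1|
          ≤ (3 * L / lam + L * (7 + 6 * L) * (1 + L) / lam ^ 2) * Real.sqrt (‖x‖ ^ 2 + y ^ 2) := by
      intro i
      have hV := hb ((EuclideanSpace.single i (1 : ℝ)), (0 : ℝ))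
      have hnorm1 : ‖(((EuclideanSpace.single i (1:ℝ)), (0:ℝ)) : EuclideanSpace ℝ (Fin n) × ℝ)‖
          = 1 := by
        rw [Prod.norm_def]
        simp [EuclideanSpace.norm_single]
      rw [hnorm1, mul_one] at hV
      have hco : (D ((EuclideanSpace.single i (1 : ℝ)), (0 : ℝ))).1 i - 1
          = (D ((EuclideanSpace.single i (1 : ℝ)), (0 : ℝ))
              - ((EuclideanSpace.single i (1 : ℝ)), (0 : ℝ))).1 i := by
        simp [EuclideanSpace.single_apply]
      rw [hco]
      refine le_trans (abs_coord_le_norm _ i) (le_trans (norm_fst_le _) hV)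
    have hterm2 : |(D ((0 : EuclideanSpace ℝ (Fin n)), (1 : ℝ))).2 - 1|
        ≤ (3 * L / lam + L * (7 + 6 * L) * (1 + L) / lam ^ 2) * Real.sqrt (‖x‖ ^ 2 + y ^ 2) := by
      have hV := hb ((0 : EuclideanSpace ℝ (Fin n)), (1 : ℝ))
      have hnorm1 : ‖(((0 : EuclideanSpace ℝ (Fin n)), (1:ℝ)) : EuclideanSpace ℝ (Fin n) × ℝ)‖
          = 1 := by
        rw [Prod.norm_def]
        simp
      rw [hnorm1, mul_one] at hV
      have hco : (D ((0 : EuclideanSpace ℝ (Fin n)), (1 : ℝ))).2 - 1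
          = (D ((0 : EuclideanSpace ℝ (Fin n)), (1 : ℝ))
              - ((0 : EuclideanSpace ℝ (Fin n)), (1 : ℝ))).2 := by
        simp
      rw [hco]
      refine le_trans ?_ (le_trans (norm_snd_le _) hV)
      rw [Real.norm_eq_abs]
    have hsum : (∑ i : Fin n, (D ((EuclideanSpace.single i (1 : ℝ)), (0 : ℝ))).1 i)
          + (D ((0 : EuclideanSpace ℝ (Fin n)), (1 : ℝ))).2 - ((n : ℝ) + 1)
        = (∑ i : Fin n, ((D ((EuclideanSpace.single i (1 : ℝ)), (0 : ℝ))).1 i - 1))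
          + ((D ((0 : EuclideanSpace ℝ (Fin n)), (1 : ℝ))).2 - 1) := by
      rw [Finset.sum_sub_distrib]
      simp [Finset.card_univ]
      ring
    rw [hsum]
    have habs1 : |∑ i : Fin n, ((D ((EuclideanSpace.single i (1 : ℝ)), (0 : ℝ))).1 i - 1)|
        ≤ (n:ℝ) * ((3 * L / lam + L * (7 + 6 * L) * (1 + L) / lam ^ 2)
            * Real.sqrt (‖x‖ ^ 2 + y ^ 2)) := by
      refine le_trans (Finset.abs_sum_le_sum_abs _ _) ?_
      refine le_trans (Finset.sum_le_sum fun i _ => hterm i) ?_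
      rw [Finset.sum_const, Finset.card_univ, Fintype.card_fin, nsmul_eq_mul]
    have hfin := abs_add_le
      (∑ i : Fin n, ((D ((EuclideanSpace.single i (1 : ℝ)), (0 : ℝ))).1 i - 1))
      ((D ((0 : EuclideanSpace ℝ (Fin n)), (1 : ℝ))).2 - 1)
    have hC0ε : 0 ≤ (3 * L / lam + L * (7 + 6 * L) * (1 + L) / lam ^ 2)
        * Real.sqrt (‖x‖ ^ 2 + y ^ 2) := mul_nonneg hC0 h0.le
    nlinarith [habs1, hterm2, hfin, mul_nonneg hnn hC0ε, h0.le]
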